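/- Let G and H be finite simple graphs such that H contains a t-clique as a subgraph and H is properly t-colorable. Then G contains a t-clique if and only if the tensor product of H and G contains a (not necessarily induced) subgraph isomorphic to H. -/

import Mathlib

/-- The tensor (categorical) product of `H` and `G`: vertices are pairs,
with an edge iff both coordinates are adjacent. -/
def SimpleGraph.tensorProd {α β : Type*} (H : SimpleGraph α) (G : SimpleGraph β) :
    SimpleGraph (α × β) where
  Adj p q := H.Adj p.1 q.1 ∧ G.Adj p.2 q.2
  symm := ⟨fun _ _ h => ⟨h.1.symm, h.2.symm⟩⟩
  loopless := ⟨fun p h => H.loopless.irrefl p.1 h.1⟩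

theorem clique_iff_tensor_contains_H {α β : Type*} (H : SimpleGraph α) (G : SimpleGraph β)
    (t : ℕ) (hHclique : ∃ sH : Finset α, H.IsNClique t sH)
    (hHcol : Nonempty (H.Coloring (Fin t))) :
    (∃ sG : Finset β, G.IsNClique t sG) ↔
      ∃ f : α → α × β, Function.Injective f ∧
        ∀ u w : α, H.Adj u w → (H.tensorProd G).Adj (f u) (f w) := by
  constructor
  · rintro ⟨sG, hsG⟩
    obtain ⟨c⟩ := hHcol
    -- a bijection Fin t ≃ sG
    have hcard : sG.card = t := hsG.2
    let e : Fin t ≃ {x // x ∈ sG} := (Fintype.equivFinOfCardEq (by simpa using hcard)).symm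
    refine ⟨fun u => (u, (e (c u) : β)), ?_, ?_⟩
    · intro u v h
      exact congrArg Prod.fst h
    · intro u w huw
      refine ⟨huw, ?_⟩
      have hne : c u ≠ c w := c.valid huw
      have hne' : (e (c u) : β) ≠ (e (c w) : β) := by
        intro h
        exact hne (e.injective (Subtype.ext h))
      exact hsG.1 (e (c u)).2 (e (c w)).2 hne'
  · rintro ⟨f, hinj, hadj⟩
    classical
    obtain ⟨sH, hsH⟩ := hHclique
    refine ⟨sH.image (fun u => (f u).2), ?_, ?_⟩
    · intro x hx y hy hxy
      simp only [Finset.coe_image, Set.mem_image, Finset.mem_coe] at hx hy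
      obtain ⟨u, hu, rfl⟩ := hx
      obtain ⟨w, hw, rfl⟩ := hy
      have huw : u ≠ w := fun h => hxy (by rw [h])
      exact (hadj u w (hsH.1 hu hw huw)).2
    · rw [Finset.card_image_of_injOn, hsH.2]
      intro u hu w hw h
      by_contra hne
      have := (hadj u w (hsH.1 hu hw hne)).2
      exact this.ne h
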